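/- More generally, for a formal group law over a p-torsion-free ring R, the cokernel of the canonical map R[[x]]/[p^k](x) → ∏_{j=0}^{k} R[[x]]/⟨p^j⟩(x) is annihilated by p^k (independently of the formal group law and of any 'height'). -/

import Mathlib

open PowerSeries

set_option synthInstance.maxHeartbeats 1000000 in
set_option maxHeartbeats 1000000 in
/-- For a formal group law over a `p`-torsion-free commutative
ring `R`, the cokernel of the canonical map
`R⟦x⟧/[p^k](x) → ∏_{j=0}^{k} R⟦x⟧/⟨p^j⟩(x)`, `x ↦ (0, x, …, x)`, is annihilated
by `p^k`, independently of the formal group law and of any "height".  Here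
`pSer j = [p^j](x)` with `pSer 0 = x`, `bSer 0 = ⟨p^0⟩(x) = x`,
`[p^j](x) = [p^{j-1}](x)·⟨p^j⟩(x)`, and, writing `⟨p⟩(x) = p + f(x)` with
`x ∣ f(x)`, one has `⟨p^{j+1}⟩(x) = p + f([p^j](x))` where
`fc j = f([p^j](x))` is divisible by `[p^j](x)`. -/
theorem coker_cyclic_decomposition_killed_by_p_pow {R : Type*} [CommRing R]
    (p : ℕ) [Fact p.Prime]
    (hptf : ∀ r : R, (p : R) * r = 0 → r = 0)
    (pSer bSer fc : ℕ → PowerSeries R)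
    (hp0 : pSer 0 = PowerSeries.X)
    (hb0 : bSer 0 = PowerSeries.X)
    (hrec : ∀ j : ℕ, 1 ≤ j → pSer j = pSer (j - 1) * bSer j)
    (hbj : ∀ j : ℕ, bSer (j + 1) = PowerSeries.C (p : R) + fc j)
    (hfc : ∀ j : ℕ, pSer j ∣ fc j)
    (k : ℕ)
    (φ : (PowerSeries R ⧸ Ideal.span {pSer k}) →+*
        ((j : Fin (k + 1)) → PowerSeries R ⧸ Ideal.span {bSer (j : ℕ)}))
    (hφ : ∀ g : PowerSeries R,
      φ (Ideal.Quotient.mk (Ideal.span {pSer k}) g) =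
        fun j : Fin (k + 1) => Ideal.Quotient.mk (Ideal.span {bSer (j : ℕ)}) g) :
    ∀ y : (j : Fin (k + 1)) → PowerSeries R ⧸ Ideal.span {bSer (j : ℕ)},
      p ^ k • y ∈ Set.range φ := by
  classical
  intro y
  choose g hg using fun j : Fin (k + 1) =>
    Ideal.Quotient.mk_surjective (I := Ideal.span {bSer (j : ℕ)}) (y j)
  have hprod : ∀ j, pSer j = ∏ i ∈ Finset.range (j + 1), bSer i := by
    intro j
    induction j with
    | zero => simp [hp0, hb0]
    | succ n ih =>
      have h := hrec (n + 1) (by omega)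
      simp only [Nat.add_sub_cancel] at h
      rw [Finset.prod_range_succ, ← ih, ← h]
  have hdvd : ∀ i j : ℕ, i ≤ j → bSer i ∣ pSer j := fun i j hij => by
    rw [hprod]; exact Finset.dvd_prod_of_mem _ (Finset.mem_range.mpr (by omega))
  set A : ℕ → PowerSeries R := fun j => match j with
    | 0 => 1
    | n + 1 => -fc n with hA
  set G : ℕ → PowerSeries R := fun j =>
    PowerSeries.C ((p : R) ^ (j - 1)) * A j * ∏ i ∈ Finset.Ioc j k, bSer i with hGdef
  have hGdvd : ∀ i j : ℕ, j ≤ k → i ≤ k → i ≠ j → bSer i ∣ G j := by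
    intro i j hj hi hij
    rcases lt_or_gt_of_ne hij with h | h
    · obtain ⟨n, rfl⟩ : ∃ n, j = n + 1 := ⟨j - 1, by omega⟩
      have h1 : bSer i ∣ fc n := (hdvd i n (by omega)).trans (hfc n)
      have h2 : bSer i ∣ A (n + 1) := by simpa [hA] using h1.neg_right
      exact Dvd.dvd.mul_right (Dvd.dvd.mul_left h2 _) _
    · exact Dvd.dvd.mul_left (Finset.dvd_prod_of_mem _ (Finset.mem_Ioc.mpr ⟨h, hi⟩)) _
  have hGmod : ∀ j : ℕ, j ≤ k →
      Ideal.Quotient.mk (Ideal.span {bSer j}) (G j)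
        = Ideal.Quotient.mk (Ideal.span {bSer j}) (PowerSeries.C ((p : R) ^ k)) := by
    intro j hj
    have hzero : ∀ m : ℕ, j ≤ m →
        Ideal.Quotient.mk (Ideal.span {bSer j}) (fc m) = 0 := by
      intro m hm
      rw [Ideal.Quotient.eq_zero_iff_mem, Ideal.mem_span_singleton]
      exact (hdvd j m hm).trans (hfc m)
    have hbb : ∀ i ∈ Finset.Ioc j k,
        Ideal.Quotient.mk (Ideal.span {bSer j}) (bSer i)
          = Ideal.Quotient.mk (Ideal.span {bSer j}) (PowerSeries.C (p : R)) := by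
      intro i hi
      rw [Finset.mem_Ioc] at hi
      obtain ⟨m, rfl⟩ : ∃ m, i = m + 1 := ⟨i - 1, by omega⟩
      rw [hbj m, map_add, hzero m (by omega), add_zero]
    have hprodb : Ideal.Quotient.mk (Ideal.span {bSer j}) (∏ i ∈ Finset.Ioc j k, bSer i)
        = Ideal.Quotient.mk (Ideal.span {bSer j}) (PowerSeries.C ((p : R) ^ (k - j))) := by
      rw [map_prod, Finset.prod_congr rfl hbb, Finset.prod_const, Nat.card_Ioc,
        map_pow, map_pow]
    have hAj : Ideal.Quotient.mk (Ideal.span {bSer j}) (A j)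
        = Ideal.Quotient.mk (Ideal.span {bSer j})
            (PowerSeries.C ((p : R) ^ (j - (j - 1)))) := by
      rcases Nat.eq_zero_or_pos j with rfl | hjpos
      · simp [hA]
      · obtain ⟨n, rfl⟩ : ∃ n, j = n + 1 := ⟨j - 1, by omega⟩
        have hAv : A (n + 1) = -fc n := rfl
        have hbz : Ideal.Quotient.mk (Ideal.span {bSer (n + 1)}) (bSer (n + 1)) = 0 := by
          rw [Ideal.Quotient.eq_zero_iff_mem, Ideal.mem_span_singleton]
        have hfn : Ideal.Quotient.mk (Ideal.span {bSer (n + 1)}) (fc n)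
            = - Ideal.Quotient.mk (Ideal.span {bSer (n + 1)}) (PowerSeries.C (p : R)) := by
          have := congrArg (Ideal.Quotient.mk (Ideal.span {bSer (n + 1)})) (hbj n)
          rw [map_add, hbz] at this
          linear_combination -this
        have he1 : n + 1 - (n + 1 - 1) = 1 := by omega
        rw [hAv, map_neg, hfn, neg_neg, he1, pow_one]
    calc Ideal.Quotient.mk (Ideal.span {bSer j}) (G j)
        = Ideal.Quotient.mk (Ideal.span {bSer j}) (PowerSeries.C ((p : R) ^ (j - 1)))
          * Ideal.Quotient.mk (Ideal.span {bSer j}) (A j)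
          * Ideal.Quotient.mk (Ideal.span {bSer j}) (∏ i ∈ Finset.Ioc j k, bSer i) := by
          simp only [hGdef, map_mul]
      _ = Ideal.Quotient.mk (Ideal.span {bSer j}) (PowerSeries.C ((p : R) ^ k)) := by
          rw [hAj, hprodb]
          simp only [← map_mul, ← pow_add]
          have he : j - 1 + (j - (j - 1)) + (k - j) = k := by omega
          rw [he]
  refine ⟨Ideal.Quotient.mk _ (∑ j : Fin (k + 1), G (j : ℕ) * g j), ?_⟩
  rw [hφ]
  funext i
  have hk : ∀ j : Fin (k + 1), (j : ℕ) ≤ k := fun j => by omega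
  have hsum : Ideal.Quotient.mk (Ideal.span {bSer (i : ℕ)})
      (∑ j : Fin (k + 1), G (j : ℕ) * g j)
      = ∑ j : Fin (k + 1), Ideal.Quotient.mk (Ideal.span {bSer (i : ℕ)}) (G (j : ℕ))
          * Ideal.Quotient.mk (Ideal.span {bSer (i : ℕ)}) (g j) := by
    rw [map_sum]
    exact Finset.sum_congr rfl fun j _ => map_mul _ _ _
  rw [hsum, Finset.sum_eq_single i]
  · rw [hGmod (i : ℕ) (hk i), hg i]
    have hcast : PowerSeries.C ((p : R) ^ k) = ((p ^ k : ℕ) : PowerSeries R) := by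
      push_cast
      rw [map_pow, map_natCast]
    rw [hcast, map_natCast, Pi.smul_apply, nsmul_eq_mul]
  · intro j _ hji
    have hz : Ideal.Quotient.mk (Ideal.span {bSer (i : ℕ)}) (G (j : ℕ)) = 0 := by
      rw [Ideal.Quotient.eq_zero_iff_mem, Ideal.mem_span_singleton]
      exact hGdvd (i : ℕ) (j : ℕ) (hk j) (hk i) fun h => hji (Fin.ext h.symm)
    rw [hz, zero_mul]
  · intro h
    exact absurd (Finset.mem_univ i) h
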